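/- For the complete bipartite graph K_{r_1, r_2} with r_1, r_2 ≥ 1 and r_1 + r_2 ≥ 3, the edge metric dimension is r_1 + r_2 - 2. -/

import Mathlib

open SimpleGraph

variable {V W : Type*}

/-- Distance (in `ℕ∞`) from a vertex to an edge: the minimum of the distances
to the two endpoints. -/
noncomputable def edgeDist (G : SimpleGraph V) (v : V) (e : Sym2 V) : ℕ∞ :=
  Sym2.lift ⟨fun a b => min (G.edist v a) (G.edist v b),
    fun a b => min_comm _ _⟩ e

/-- A set of vertices is an edge metric generator if every pair of distinct
edges is distinguished by some vertex of the set. -/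
def IsEdgeMetricGenerator (G : SimpleGraph V) (S : Set V) : Prop :=
  ∀ e₁ ∈ G.edgeSet, ∀ e₂ ∈ G.edgeSet, e₁ ≠ e₂ →
    ∃ w ∈ S, edgeDist G w e₁ ≠ edgeDist G w e₂

/-- The edge metric dimension: minimum cardinality of an edge metric generator. -/
noncomputable def edim (G : SimpleGraph V) : ℕ :=
  sInf {n | ∃ S : Set V, S.ncard = n ∧ IsEdgeMetricGenerator G S}


/-- The join of two graphs: disjoint union plus all edges across. -/
def joinGraph (G : SimpleGraph V) (H : SimpleGraph W) : SimpleGraph (V ⊕ W) where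
  Adj x y := match x, y with
    | .inl a, .inl b => G.Adj a b
    | .inr a, .inr b => H.Adj a b
    | .inl _, .inr _ => True
    | .inr _, .inl _ => True
  symm := by constructor; rintro (a | a) (b | b) h <;> simp_all [SimpleGraph.adj_comm]
  loopless := by
    constructor
    rintro (a | a) h
    · exact h.ne rfl
    · exact h.ne rfl

/-- A total dominating set: every vertex has a neighbor in the set. -/
def IsTotalDomSet (G : SimpleGraph V) (D : Set V) : Prop :=
  ∀ v : V, ∃ d ∈ D, G.Adj v d

/-- The total domination number. -/
noncomputable def totalDomNum (G : SimpleGraph V) : ℕ :=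
  sInf {n | ∃ D : Set V, D.ncard = n ∧ IsTotalDomSet G D}

/-- The class 𝒢: for every vertex `u` there is a neighbor `v`
such that `{u, v}` is a minimum total dominating set. -/
def InClassG (G : SimpleGraph V) : Prop :=
  ∀ u : V, ∃ v : V, G.Adj u v ∧ IsTotalDomSet G {u, v} ∧
    ({u, v} : Set V).ncard = totalDomNum G

/-- Lexicographic product `G[H]`. -/
def lexProd (G : SimpleGraph V) (H : SimpleGraph W) : SimpleGraph (V × W) where
  Adj x y := G.Adj x.1 y.1 ∨ (x.1 = y.1 ∧ H.Adj x.2 y.2)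
  symm := by constructor; rintro ⟨g, h⟩ ⟨g', h'⟩ (hadj | ⟨rfl, hadj⟩)
             · exact Or.inl hadj.symm
             · exact Or.inr ⟨rfl, hadj.symm⟩
  loopless := by constructor; rintro ⟨g, h⟩ (hadj | ⟨-, hadj⟩)
                 · exact hadj.ne rfl
                 · exact hadj.ne rfl

/-- Corona product `G ⊙ H`: vertex `(g, none)` is the vertex `g` of `G`, and
`(g, some h)` is the vertex `h` of the copy of `H` attached to `g`. -/
def corona (G : SimpleGraph V) (H : SimpleGraph W) : SimpleGraph (V × Option W) where
  Adj x y := match x, y with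
    | (g, none), (g', none) => G.Adj g g'
    | (g, none), (g', some _) => g = g'
    | (g, some _), (g', none) => g = g'
    | (g, some h), (g', some h') => g = g' ∧ H.Adj h h'
  symm := by constructor; rintro ⟨g, (_ | h)⟩ ⟨g', (_ | h')⟩ hadj <;>
             simp_all [SimpleGraph.adj_comm, eq_comm]
  loopless := by constructor; rintro ⟨g, (_ | h)⟩ hadj <;> simp_all

/-- The closed neighborhood of a vertex. -/
def closedNbhd (G : SimpleGraph V) (u : V) : Set V :=
  insert u (G.neighborSet u)

/-- `u` and `v` are false twins: equal open neighborhoods. -/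
def FalseTwin (G : SimpleGraph V) (u v : V) : Prop :=
  G.neighborSet u = G.neighborSet v

/-- `u` and `v` are true twins: equal closed neighborhoods. -/
def TrueTwin (G : SimpleGraph V) (u v : V) : Prop :=
  closedNbhd G u = closedNbhd G v

/-- The union of the closed neighborhoods of the two endpoints of an edge. -/
def edgeNbhd (G : SimpleGraph V) : Sym2 V → Set V :=
  Sym2.lift ⟨fun a b => closedNbhd G a ∪ closedNbhd G b, fun _ _ => Set.union_comm _ _⟩

/-- Two edges are twin edges: `N[u] ∪ N[v] = N[x] ∪ N[y]`. -/
def TwinEdges (G : SimpleGraph V) (e f : Sym2 V) : Prop :=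
  edgeNbhd G e = edgeNbhd G f

/-- The set of edges lying in nontrivial edge-twin classes. -/
def nontrivTwinEdges (G : SimpleGraph V) : Set (Sym2 V) :=
  {e ∈ G.edgeSet | ∃ f ∈ G.edgeSet, f ≠ e ∧ TwinEdges G e f}

/-- `q(G)`: the number of edges lying in nontrivial edge-twin classes. -/
noncomputable def qval (G : SimpleGraph V) : ℕ := (nontrivTwinEdges G).ncard

/-- `q'(G) = q(G) - m`, where `m` is the number of nontrivial edge-twin classes. -/
noncomputable def q'val (G : SimpleGraph V) : ℕ :=
  qval G - (edgeNbhd G '' nontrivTwinEdges G).ncard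

/-- The set of vertices lying in nontrivial false-twin classes. -/
def nontrivFalseTwins (G : SimpleGraph V) : Set V :=
  {v | ∃ u, u ≠ v ∧ FalseTwin G u v}

/-- The set of vertices lying in nontrivial true-twin classes. -/
def nontrivTrueTwins (G : SimpleGraph V) : Set V :=
  {v | ∃ u, u ≠ v ∧ TrueTwin G u v}

/-- `f'(G) = f(G) - k`: vertices in nontrivial false-twin classes minus the
number of such classes. -/
noncomputable def f'val (G : SimpleGraph V) : ℕ :=
  (nontrivFalseTwins G).ncard - (G.neighborSet '' nontrivFalseTwins G).ncard

/-- `t'(G) = t(G) - ℓ`: vertices in nontrivial true-twin classes minus the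
number of such classes. -/
noncomputable def t'val (G : SimpleGraph V) : ℕ :=
  (nontrivTrueTwins G).ncard - (closedNbhd G '' nontrivTrueTwins G).ncard

/-- A set of representatives for the twin deletion operation: it contains
exactly one vertex from each (false- or true-) twin equivalence class. -/
def IsTwinDeletionSet (G : SimpleGraph V) (R : Set V) : Prop :=
  ∀ v : V, ∃! r : V, r ∈ R ∧ (FalseTwin G v r ∨ TrueTwin G v r)


section Helpers

variable {r₁ r₂ : ℕ}

private lemma kb_edge_mem {e : Sym2 (Fin r₁ ⊕ Fin r₂)}
    (he : e ∈ (completeBipartiteGraph (Fin r₁) (Fin r₂)).edgeSet) :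
    ∃ a b, e = s(Sum.inl a, Sum.inr b) := by
  induction e using Sym2.ind with
  | _ x y =>
    rw [SimpleGraph.mem_edgeSet] at he
    rcases x with a | b <;> rcases y with a' | b' <;> simp_all

private lemma kb_edgeDist_zero {V : Type*} (G : SimpleGraph V) {w : V} {e : Sym2 V}
    (hw : w ∈ e) : edgeDist G w e = 0 := by
  induction e using Sym2.ind with
  | _ x y =>
    rcases Sym2.mem_iff.mp hw with rfl | rfl <;>
      simp [edgeDist, SimpleGraph.edist_self]

private lemma kb_edgeDist_one {w : Fin r₁ ⊕ Fin r₂} {a : Fin r₁} {b : Fin r₂}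
    (h1 : w ≠ Sum.inl a) (h2 : w ≠ Sum.inr b) :
    edgeDist (completeBipartiteGraph (Fin r₁) (Fin r₂)) w s(Sum.inl a, Sum.inr b) = 1 := by
  simp only [edgeDist, Sym2.lift_mk]
  rcases w with a' | b'
  · have hadj : (completeBipartiteGraph (Fin r₁) (Fin r₂)).Adj (Sum.inl a') (Sum.inr b) := by
      simp
    rw [SimpleGraph.edist_eq_one_iff_adj.mpr hadj]
    refine min_eq_right (ENat.one_le_iff_ne_zero.mpr fun hz => h1 ?_)
    rw [SimpleGraph.edist_eq_zero_iff.mp hz]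
  · have hadj : (completeBipartiteGraph (Fin r₁) (Fin r₂)).Adj (Sum.inr b') (Sum.inl a) := by
      simp
    rw [SimpleGraph.edist_eq_one_iff_adj.mpr hadj]
    refine min_eq_left (ENat.one_le_iff_ne_zero.mpr fun hz => h2 ?_)
    rw [SimpleGraph.edist_eq_zero_iff.mp hz]

/-- For the complete bipartite graph, a vertex distinguishes two edges iff it belongs to
exactly one of them; in particular a distinguishing vertex lies in exactly one edge. -/
private lemma kb_distinguish {w : Fin r₁ ⊕ Fin r₂} {e₁ e₂ : Sym2 (Fin r₁ ⊕ Fin r₂)}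
    (he₁ : e₁ ∈ (completeBipartiteGraph (Fin r₁) (Fin r₂)).edgeSet)
    (he₂ : e₂ ∈ (completeBipartiteGraph (Fin r₁) (Fin r₂)).edgeSet)
    (hne : edgeDist (completeBipartiteGraph (Fin r₁) (Fin r₂)) w e₁ ≠
      edgeDist (completeBipartiteGraph (Fin r₁) (Fin r₂)) w e₂) :
    (w ∈ e₁ ∧ w ∉ e₂) ∨ (w ∈ e₂ ∧ w ∉ e₁) := by
  obtain ⟨a, b, rfl⟩ := kb_edge_mem he₁
  obtain ⟨a', b', rfl⟩ := kb_edge_mem he₂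
  by_cases h1 : w ∈ s(Sum.inl a, Sum.inr b) <;> by_cases h2 : w ∈ s(Sum.inl a', Sum.inr b')
  · exact absurd (by rw [kb_edgeDist_zero _ h1, kb_edgeDist_zero _ h2]) hne
  · exact Or.inl ⟨h1, h2⟩
  · exact Or.inr ⟨h2, h1⟩
  · rw [Sym2.mem_iff, not_or] at h1 h2
    exact absurd (by rw [kb_edgeDist_one h1.1 h1.2, kb_edgeDist_one h2.1 h2.2]) hne

end Helpers

theorem edim_completeBipartite (r₁ r₂ : ℕ) (h₁ : 1 ≤ r₁) (h₂ : 1 ≤ r₂)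
    (h₃ : 3 ≤ r₁ + r₂) :
    edim (completeBipartiteGraph (Fin r₁) (Fin r₂)) = r₁ + r₂ - 2 := by
  have a₀ : Fin r₁ := ⟨0, h₁⟩
  have b₀ : Fin r₂ := ⟨0, h₂⟩
  set K := completeBipartiteGraph (Fin r₁) (Fin r₂) with hK
  -- the explicit generator: everything except `inl a₀` and `inr b₀`
  set S₀ : Set (Fin r₁ ⊕ Fin r₂) := ({Sum.inl a₀, Sum.inr b₀} : Set _)ᶜ with hS₀
  have hcardS₀ : S₀.ncard = r₁ + r₂ - 2 := by
    have h := Set.ncard_add_ncard_compl S₀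
    rw [compl_compl, Set.ncard_pair (by simp)] at h
    have hcardV : Nat.card (Fin r₁ ⊕ Fin r₂) = r₁ + r₂ := by simp
    omega
  have hgen : IsEdgeMetricGenerator K S₀ := by
    intro e₁ he₁ e₂ he₂ hne
    obtain ⟨a, b, rfl⟩ := kb_edge_mem he₁
    obtain ⟨a', b', rfl⟩ := kb_edge_mem he₂
    have hab : a ≠ a' ∨ b ≠ b' := by
      by_contra h
      push_neg at h
      exact hne (by rw [h.1, h.2])
    rcases hab with hab | hab
    · by_cases ha : a = a₀
      · have ha' : a' ≠ a₀ := fun h => hab (ha.trans h.symm)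
        have hab' : a' ≠ a := fun h => hab h.symm
        refine ⟨Sum.inl a', by simp [hS₀, ha'], ?_⟩
        rw [kb_edgeDist_one (by simpa using hab') (by simp),
          kb_edgeDist_zero _ (by simp)]
        simp
      · refine ⟨Sum.inl a, by simp [hS₀, ha], ?_⟩
        rw [kb_edgeDist_zero _ (by simp), kb_edgeDist_one (by simpa using hab) (by simp)]
        simp
    · by_cases hb : b = b₀
      · have hb' : b' ≠ b₀ := fun h => hab (hb.trans h.symm)
        have hab' : b' ≠ b := fun h => hab h.symm
        refine ⟨Sum.inr b', by simp [hS₀, hb'], ?_⟩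
        rw [kb_edgeDist_one (by simp) (by simpa using hab'),
          kb_edgeDist_zero _ (by simp)]
        simp
      · refine ⟨Sum.inr b, by simp [hS₀, hb], ?_⟩
        rw [kb_edgeDist_zero _ (by simp), kb_edgeDist_one (by simp) (by simpa using hab)]
        simp
  apply le_antisymm
  · exact Nat.sInf_le ⟨S₀, hcardS₀, hgen⟩
  · refine le_csInf ⟨_, S₀, rfl, hgen⟩ ?_
    rintro n ⟨S, rfl, hS⟩
    -- the complement of any generator contains at most one left and one right vertex
    have hL : ∀ a a' : Fin r₁, Sum.inl a ∉ S → Sum.inl a' ∉ S → a = a' := by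
      intro a a' ha ha'
      by_contra hne
      obtain ⟨w, hwS, hw⟩ := hS s(Sum.inl a, Sum.inr b₀) (by simp [hK])
        s(Sum.inl a', Sum.inr b₀) (by simp [hK]) (by simp [hne])
      rcases kb_distinguish (by simp) (by simp) hw with ⟨h1, h2⟩ | ⟨h1, h2⟩ <;>
        rw [Sym2.mem_iff] at h1 <;> rcases h1 with rfl | rfl <;> simp_all
    have hR : ∀ b b' : Fin r₂, Sum.inr b ∉ S → Sum.inr b' ∉ S → b = b' := by
      intro b b' hb hb'
      by_contra hne
      obtain ⟨w, hwS, hw⟩ := hS s(Sum.inl a₀, Sum.inr b) (by simp [hK])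
        s(Sum.inl a₀, Sum.inr b') (by simp [hK]) (by simp [hne])
      rcases kb_distinguish (by simp) (by simp) hw with ⟨h1, h2⟩ | ⟨h1, h2⟩ <;>
        rw [Sym2.mem_iff] at h1 <;> rcases h1 with rfl | rfl <;> simp_all
    have hsub : Sᶜ ⊆ (Sᶜ ∩ Set.range Sum.inl) ∪ (Sᶜ ∩ Set.range Sum.inr) := by
      rintro (a | b) hx
      · exact Or.inl ⟨hx, a, rfl⟩
      · exact Or.inr ⟨hx, b, rfl⟩
    have hc1 : (Sᶜ ∩ Set.range Sum.inl).ncard ≤ 1 := by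
      rw [Set.ncard_le_one_iff]
      rintro x y ⟨hx, a, rfl⟩ ⟨hy, a', rfl⟩
      rw [hL a a' hx hy]
    have hc2 : (Sᶜ ∩ Set.range Sum.inr).ncard ≤ 1 := by
      rw [Set.ncard_le_one_iff]
      rintro x y ⟨hx, b, rfl⟩ ⟨hy, b', rfl⟩
      rw [hR b b' hx hy]
    have hcompl : Sᶜ.ncard ≤ 2 := by
      calc Sᶜ.ncard ≤ ((Sᶜ ∩ Set.range Sum.inl) ∪ (Sᶜ ∩ Set.range Sum.inr)).ncard :=
            Set.ncard_le_ncard hsub (Set.toFinite _)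
        _ ≤ (Sᶜ ∩ Set.range Sum.inl).ncard + (Sᶜ ∩ Set.range Sum.inr).ncard :=
            Set.ncard_union_le _ _
        _ ≤ 2 := by omega
    have h := Set.ncard_add_ncard_compl S
    have hcardV : Nat.card (Fin r₁ ⊕ Fin r₂) = r₁ + r₂ := by simp
    omega
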